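/- Let r, n, d, m be positive integers and set s = C(n+d,d)+1 and γ = 2r²m·s. There exists c = c(r,n,d,m) > 0 such that every r-uniform algebraic hypergraph H of complexity (n,d,m) on N vertices contains a clique or an independent set of size at least c·N^{1/γ}. -/

import Mathlib

set_option synthInstance.maxHeartbeats 1000000
set_option maxHeartbeats 1000000
set_option synthInstance.maxHeartbeats 1000000
set_option maxHeartbeats 1000000

open MvPolynomial
open scoped Classical

namespace Stmt10Aux

variable {F : Type} [Field F]

/-- monomial functions -/
def mu (n : ℕ) (α : Fin n → ℕ) : (Fin n → F) → F := fun v => ∏ b, v b ^ α b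

/-- exponent vectors of total degree at most d -/
def TT (n d : ℕ) : Finset (Fin n → ℕ) :=
  (Finset.univ.image (fun a : Fin n → Fin (d+1) => fun b => ((a b : ℕ)))).filter
    (fun α => ∑ b, α b ≤ d)

/-- span of monomial functions of degree ≤ d -/
noncomputable def Mon (F : Type) [Field F] (n d : ℕ) : Submodule F ((Fin n → F) → F) :=
  Submodule.span F ((mu n) '' (TT n d : Set (Fin n → ℕ)))

noncomputable def restr (X : Finset (Fin n → F)) : ((Fin n → F) → F) →ₗ[F] (↥X → F) :=
  LinearMap.funLeft F F (fun x : ↥X => (x : Fin n → F))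

noncomputable def rho (n d : ℕ) (X : Finset (Fin n → F)) : ℕ :=
  Module.finrank F ((Mon F n d).map (restr X))

lemma rho_le (n d : ℕ) (X : Finset (Fin n → F)) : rho n d X ≤ (TT n d).card := by
  classical
  have h1 : (Mon F n d).map (restr X) =
      Submodule.span F (((TT n d).image (fun α => restr X (mu n α)) : Finset (↥X → F)) :
        Set (↥X → F)) := by
    rw [Mon, Submodule.map_span]
    congr 1
    rw [Finset.coe_image]
    rw [← Set.image_comp]
    rfl
  rw [rho, h1]
  refine le_trans (finrank_span_finset_le_card _) ?_
  exact Finset.card_image_le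

lemma finrank_map_lt {M N : Type} [AddCommGroup M] [Module F M] [AddCommGroup N] [Module F N]
    [FiniteDimensional F M] (π : M →ₗ[F] N) (A : Submodule F M) (a : M) (ha : a ∈ A)
    (h0 : a ≠ 0) (hker : π a = 0) : Module.finrank F (A.map π) < Module.finrank F A := by
  classical
  let π' : ↥A →ₗ[F] N := π.comp A.subtype
  have hrange : LinearMap.range π' = A.map π := by
    rw [LinearMap.range_comp, Submodule.range_subtype]
  have hrn := LinearMap.finrank_range_add_finrank_ker π'
  have hker' : (⟨a, ha⟩ : ↥A) ∈ LinearMap.ker π' := by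
    simp [π', LinearMap.mem_ker, hker]
  have hne : (⟨a, ha⟩ : ↥A) ≠ 0 := by
    intro h
    apply h0
    exact congrArg Subtype.val h
  have hpos : 0 < Module.finrank F (LinearMap.ker π') := by
    rw [Module.finrank_pos_iff]
    refine nontrivial_of_ne (⟨⟨a, ha⟩, hker'⟩ : LinearMap.ker π') 0 ?_
    intro h
    exact hne (congrArg Subtype.val h)
  have : Module.finrank F (A.map π) = Module.finrank F (LinearMap.range π') := by rw [hrange]
  omega

lemma rho_lt {n d : ℕ} {X Y : Finset (Fin n → F)} (hYX : Y ⊆ X) (h : (Fin n → F) → F)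
    (hmem : h ∈ Mon F n d) (x₀ : Fin n → F) (hx₀ : x₀ ∈ X) (hx0ne : h x₀ ≠ 0)
    (hvanish : ∀ y ∈ Y, h y = 0) : rho n d Y < rho n d X := by
  classical
  let π : (↥X → F) →ₗ[F] (↥Y → F) :=
    LinearMap.funLeft F F (fun y : ↥Y => (⟨(y : Fin n → F), hYX y.2⟩ : ↥X))
  have hcomp : (restr Y : ((Fin n → F) → F) →ₗ[F] (↥Y → F)) = π.comp (restr X) := rfl
  have hmap : (Mon F n d).map (restr Y) = ((Mon F n d).map (restr X)).map π := by
    rw [hcomp, ← Submodule.map_comp]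
  rw [rho, rho, hmap]
  refine finrank_map_lt π _ (restr X h) ⟨h, hmem, rfl⟩ ?_ ?_
  · intro hc
    apply hx0ne
    have := congrFun hc ⟨x₀, hx₀⟩
    exact this
  · funext y
    exact hvanish _ y.2


section
variable {r n m d : ℕ} (f : Fin m → MvPolynomial (Fin r × Fin n) F)

def NN (X : Finset (Fin n → F)) (i : Fin m) (l : List (Fin n → F)) : Prop :=
  ∀ g : Fin r → (Fin n → F),
    (∀ (j : Fin r) (h : (j : ℕ) < l.length), g j = l[(j : ℕ)]) →
    (∀ j : Fin r, l.length ≤ (j : ℕ) → g j ∈ X) →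
    eval (fun p : Fin r × Fin n => g p.1 p.2) (f i) = 0

lemma partial_mem (i : Fin m) (hdeg : (f i).totalDegree ≤ d) (g : Fin r → (Fin n → F))
    (k : Fin r) :
    (fun v => eval (fun p : Fin r × Fin n => Function.update g k v p.1 p.2) (f i))
      ∈ Mon F n d := by
  classical
  have hrep : (fun v => eval (fun p : Fin r × Fin n => Function.update g k v p.1 p.2) (f i))
      = ∑ s ∈ (f i).support,
          ((f i).coeff s * ∏ j ∈ Finset.univ.erase k, ∏ b, g j b ^ s (j, b)) •
            (mu n (fun b => s (k, b)) : (Fin n → F) → F) := by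
    funext v
    rw [Finset.sum_apply, eval_eq']
    apply Finset.sum_congr rfl
    intro s _
    have h1 : ∏ p : Fin r × Fin n, Function.update g k v p.1 p.2 ^ s p
        = ∏ j, ∏ b, Function.update g k v j b ^ s (j, b) := Fintype.prod_prod_type _
    rw [h1, ← Finset.mul_prod_erase Finset.univ _ (Finset.mem_univ k)]
    have h2 : ∀ j ∈ Finset.univ.erase k,
        ∏ b, Function.update g k v j b ^ s (j, b) = ∏ b, g j b ^ s (j, b) := by
      intro j hj
      have hne : j ≠ k := (Finset.mem_erase.1 hj).1
      simp [Function.update_of_ne hne]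
    rw [Finset.prod_congr rfl h2]
    simp only [Function.update_self, Pi.smul_apply, smul_eq_mul, mu]
    ring
  rw [hrep]
  apply Submodule.sum_mem
  intro s hs
  apply Submodule.smul_mem
  apply Submodule.subset_span
  refine ⟨fun b => s (k, b), ?_, rfl⟩
  have hsum : ∑ b, s (k, b) ≤ d := by
    have h1 : ∑ b, s (k, b) ≤ ∑ j, ∑ b, s (j, b) :=
      Finset.single_le_sum (f := fun j => ∑ b, s (j, b)) (fun j _ => Nat.zero_le _)
        (Finset.mem_univ k)
    have h2 : ∑ j, ∑ b, s (j, b) = ∑ p : Fin r × Fin n, s p :=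
      (Fintype.sum_prod_type _).symm
    have h3 : ∑ p : Fin r × Fin n, s p = s.sum (fun _ e => e) := by
      rw [Finsupp.sum_fintype]
      intro a; rfl
    have h4 := MvPolynomial.le_totalDegree hs
    omega
  rw [Finset.mem_coe]
  simp only [TT, Finset.mem_filter, Finset.mem_image]
  constructor
  · refine ⟨fun b => ⟨s (k, b), ?_⟩, Finset.mem_univ _, rfl⟩
    have : s (k, b) ≤ ∑ b', s (k, b') :=
      Finset.single_le_sum (f := fun b' => s (k, b')) (fun _ _ => Nat.zero_le _)
        (Finset.mem_univ b)
    omega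
  · exact hsum

def GOOD (X : Finset (Fin n → F)) (β : ℝ) : Prop :=
  ∀ (i : Fin m) (l : List (Fin n → F)), l.length < r →
    NN f X i l ∨
      ((X.filter (fun v => NN f X i (l ++ [v]))).card : ℝ) < (X.card : ℝ) ^ ((1:ℝ) - β)

lemma loop (hdeg : ∀ i, (f i).totalDegree ≤ d) {β : ℝ} (hβ0 : 0 ≤ β) (hβ1 : β < 1) :
    ∀ (K : ℕ) (X : Finset (Fin n → F)), rho n d X ≤ K →
      ∃ X', X' ⊆ X ∧ GOOD f X' β ∧
        (X.card : ℝ) ^ (((1:ℝ) - β) ^ K) ≤ (X'.card : ℝ) := by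
  intro K
  induction K with
  | zero =>
    intro X hX
    have hXempty : X = ∅ := by
      by_contra hne
      obtain ⟨x, hx⟩ := Finset.nonempty_iff_ne_empty.2 hne
      have hmu : (mu n (fun _ => 0) : (Fin n → F) → F) ∈ Mon F n d := by
        apply Submodule.subset_span
        refine ⟨fun _ => 0, ?_, rfl⟩
        rw [Finset.mem_coe]
        simp only [TT, Finset.mem_filter, Finset.mem_image]
        exact ⟨⟨fun _ => ⟨0, Nat.succ_pos d⟩, Finset.mem_univ _, rfl⟩, by simp⟩
      have hmem : restr X (mu n (fun _ => 0)) ∈ (Mon F n d).map (restr X) :=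
        ⟨_, hmu, rfl⟩
      have hne0 : restr X (mu n (fun _ => 0)) ≠ 0 := by
        intro hc
        have := congrFun hc ⟨x, hx⟩
        simp [restr, LinearMap.funLeft, mu] at this
      haveI : FiniteDimensional F (↥X → F) := by infer_instance
      have : 0 < rho n d X := by
        rw [rho, Module.finrank_pos_iff]
        exact nontrivial_of_ne ⟨_, hmem⟩ 0 (by
          intro hc; exact hne0 (congrArg Subtype.val hc))
      omega
    refine ⟨∅, by simp [hXempty], ?_, ?_⟩
    · intro i l hlen
      left
      intro g _ h2
      exact absurd (h2 ⟨l.length, hlen⟩ (le_refl _)) (by simp)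
    · subst hXempty
      simp only [Finset.card_empty, Nat.cast_zero]
      rw [Real.zero_rpow (by norm_num)]
  | succ K ih =>
    intro X hX
    by_cases hg : GOOD f X β
    · refine ⟨X, le_refl _, hg, ?_⟩
      rcases Nat.eq_zero_or_pos X.card with h0 | h1
      · rw [h0]
        simp only [Nat.cast_zero]
        rw [Real.zero_rpow (ne_of_gt (pow_pos (by linarith) _))]
      · have hx1 : (1:ℝ) ≤ (X.card : ℝ) := by exact_mod_cast h1
        calc (X.card : ℝ) ^ (((1:ℝ) - β) ^ (K+1)) ≤ (X.card : ℝ) ^ (1:ℝ) := by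
              apply Real.rpow_le_rpow_of_exponent_le hx1
              apply pow_le_one₀ (by linarith) (by linarith)
          _ = (X.card : ℝ) := Real.rpow_one _
    · rw [GOOD] at hg
      push_neg at hg
      obtain ⟨i, l, hlen, hNN, hbigY⟩ := hg
      rw [NN] at hNN
      push_neg at hNN
      obtain ⟨g, hc1, hc2, heval⟩ := hNN
      set k₀ : Fin r := ⟨l.length, hlen⟩ with hk₀
      set Y := X.filter (fun v => NN f X i (l ++ [v])) with hY
      set h : (Fin n → F) → F :=
        fun v => eval (fun p : Fin r × Fin n => Function.update g k₀ v p.1 p.2) (f i) with hh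
      have hmem : h ∈ Mon F n d := partial_mem f i (hdeg i) g k₀
      have hx0 : g k₀ ∈ X := hc2 k₀ (le_refl _)
      have hne0 : h (g k₀) ≠ 0 := by
        rw [hh]
        simpa [Function.update_eq_self] using heval
      have hvanish : ∀ y ∈ Y, h y = 0 := by
        intro y hy
        rw [Finset.mem_filter] at hy
        obtain ⟨hyX, hNNy⟩ := hy
        apply hNNy
        · intro j hj
          rw [List.length_append, List.length_singleton] at hj
          rcases Nat.lt_or_ge (j : ℕ) l.length with hlt | hge
          · have hjne : j ≠ k₀ := by
              intro hc; rw [hc] at hlt; exact absurd hlt (by simp [hk₀])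
            rw [Function.update_of_ne hjne, hc1 j hlt]
            rw [List.getElem_append_left hlt]
          · have hj' : (j : ℕ) = l.length := by omega
            have hjeq : j = k₀ := by
              apply Fin.ext
              simp only [hk₀, hj']
            have hy : (l ++ [y])[(j : ℕ)] = y := by simp [hj']
            rw [hy, hjeq, Function.update_self]
        · intro j hj
          rw [List.length_append, List.length_singleton] at hj
          have hjne : j ≠ k₀ := by
            intro hc
            rw [hc] at hj
            simp [hk₀] at hj
          rw [Function.update_of_ne hjne]
          exact hc2 j (by omega)
      have hdrop : rho n d Y < rho n d X :=
        rho_lt (Finset.filter_subset _ _) h hmem (g k₀) hx0 hne0 hvanish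
      obtain ⟨X', hX'Y, hgood, hbound⟩ := ih Y (by omega)
      refine ⟨X', le_trans hX'Y (Finset.filter_subset _ _), hgood, ?_⟩
      have h1 : (X.card : ℝ) ^ ((1:ℝ) - β) ≤ (Y.card : ℝ) := hbigY
      calc (X.card : ℝ) ^ (((1:ℝ) - β) ^ (K+1))
          = ((X.card : ℝ) ^ ((1:ℝ) - β)) ^ (((1:ℝ) - β) ^ K) := by
            rw [pow_succ', Real.rpow_mul (by positivity)]
        _ ≤ (Y.card : ℝ) ^ (((1:ℝ) - β) ^ K) := by
            apply Real.rpow_le_rpow (by positivity) h1 (pow_nonneg (by linarith) _)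
        _ ≤ (X'.card : ℝ) := hbound


lemma NN_extend {X : Finset (Fin n → F)} {i : Fin m} {l : List (Fin n → F)}
    (hlen : l.length < r) (hNN : NN f X i l) {v : Fin n → F} (hv : v ∈ X) :
    NN f X i (l ++ [v]) := by
  intro g h1 h2
  apply hNN g
  · intro j hj
    have hg := h1 j (by rw [List.length_append, List.length_singleton]; omega)
    rw [hg, List.getElem_append_left hj]
  · intro j hj
    rcases Nat.eq_or_lt_of_le hj with heq | hlt
    · have hg := h1 j (by rw [List.length_append, List.length_singleton]; omega)
      rw [hg]
      have hy : (l ++ [v])[(j : ℕ)]'(by rw [List.length_append, List.length_singleton]; omega) = v := by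
        have hj' : (j : ℕ) = l.length := heq.symm
        simp [hj']
      rw [hy]; exact hv
    · exact h2 j (by rw [List.length_append, List.length_singleton]; omega)

def CH (X : Finset (Fin n → F)) (ws : List (Fin n → F)) : Prop :=
  ∀ (i : Fin m) (l : List (Fin n → F)) (v : Fin n → F),
    (l ++ [v]).Sublist ws → l.length + 1 ≤ r → ¬ NN f X i l → ¬ NN f X i (l ++ [v])

lemma greedy {X : Finset (Fin n → F)} {β : ℝ} (hgood : GOOD f X β) :
    ∀ k : ℕ,
      (∀ j : ℕ, j < k → (j : ℝ) + (m : ℝ) * (∑ t ∈ Finset.range r, (j.choose t : ℝ)) *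
          (X.card : ℝ) ^ ((1:ℝ) - β) < (X.card : ℝ)) →
      ∃ ws : List (Fin n → F), ws.length = k ∧ ws.Nodup ∧ (∀ v ∈ ws, v ∈ X) ∧ CH f X ws := by
  intro k
  induction k with
  | zero =>
    intro _
    refine ⟨[], rfl, List.nodup_nil, by simp, ?_⟩
    intro i l v hs _ _
    have := List.sublist_nil.1 hs
    simp at this
  | succ k ih =>
    intro hbig
    obtain ⟨ws, hlen, hnd, hmem, hch⟩ := ih (fun j hj => hbig j (by omega))
    classical
    set B : Finset (Fin n → F) := ws.toFinset ∪
      Finset.univ.biUnion (fun i : Fin m =>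
        (Finset.range r).biUnion (fun t =>
          (ws.sublistsLen t).toFinset.biUnion (fun l =>
            if NN f X i l then (∅ : Finset (Fin n → F))
            else X.filter (fun v => NN f X i (l ++ [v]))))) with hB
    have hfilterbound : ∀ (i : Fin m) (t : ℕ), t ∈ Finset.range r →
        ∀ l ∈ (ws.sublistsLen t).toFinset,
        ((if NN f X i l then (∅ : Finset (Fin n → F))
            else X.filter (fun v => NN f X i (l ++ [v]))).card : ℝ)
          ≤ (X.card : ℝ) ^ ((1:ℝ) - β) := by
      intro i t ht l hl
      rw [List.mem_toFinset, List.mem_sublistsLen] at hl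
      by_cases hNN : NN f X i l
      · rw [if_pos hNN]
        simp only [Finset.card_empty, Nat.cast_zero]
        positivity
      · rw [if_neg hNN]
        have hlt : l.length < r := by rw [hl.2]; exact Finset.mem_range.1 ht
        rcases hgood i l hlt with hc | hc
        · exact absurd hc hNN
        · exact le_of_lt hc
    have hBcard : (B.card : ℝ) < (X.card : ℝ) := by
      have h1 : B.card ≤ ws.toFinset.card +
          ∑ i : Fin m, ∑ t ∈ Finset.range r, ∑ l ∈ (ws.sublistsLen t).toFinset,
            (if NN f X i l then (∅ : Finset (Fin n → F))
              else X.filter (fun v => NN f X i (l ++ [v]))).card := by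
        refine le_trans (Finset.card_union_le _ _) ?_
        gcongr
        refine le_trans (Finset.card_biUnion_le) ?_
        gcongr with i _
        refine le_trans (Finset.card_biUnion_le) ?_
        gcongr with t _
        exact Finset.card_biUnion_le
      have h2 : ((ws.toFinset.card : ℕ) : ℝ) ≤ (k : ℝ) := by
        have := List.toFinset_card_le ws
        rw [hlen] at this
        exact_mod_cast this
      have h3 : ∀ i : Fin m, ∀ t ∈ Finset.range r,
          ((∑ l ∈ (ws.sublistsLen t).toFinset,
            (if NN f X i l then (∅ : Finset (Fin n → F))
              else X.filter (fun v => NN f X i (l ++ [v]))).card : ℕ) : ℝ)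
          ≤ (k.choose t : ℝ) * (X.card : ℝ) ^ ((1:ℝ) - β) := by
        intro i t ht
        push_cast
        refine le_trans (Finset.sum_le_sum (hfilterbound i t ht)) ?_
        rw [Finset.sum_const, nsmul_eq_mul]
        have hcard : (((ws.sublistsLen t).toFinset.card : ℕ) : ℝ) ≤ (k.choose t : ℝ) := by
          have h5 := List.toFinset_card_le (ws.sublistsLen t)
          have h4 := List.length_sublistsLen t ws
          rw [hlen] at h4
          exact_mod_cast le_trans h5 (le_of_eq h4)
        exact mul_le_mul_of_nonneg_right hcard (by positivity)
      have h5 : (B.card : ℝ) ≤ (k : ℝ) + (m : ℝ) *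
          (∑ t ∈ Finset.range r, (k.choose t : ℝ)) * (X.card : ℝ) ^ ((1:ℝ) - β) := by
        calc (B.card : ℝ) ≤ (ws.toFinset.card : ℝ) +
            ∑ i : Fin m, ∑ t ∈ Finset.range r, ((∑ l ∈ (ws.sublistsLen t).toFinset,
              (if NN f X i l then (∅ : Finset (Fin n → F))
                else X.filter (fun v => NN f X i (l ++ [v]))).card : ℕ) : ℝ) := by
              push_cast
              exact_mod_cast h1
          _ ≤ (k : ℝ) + ∑ i : Fin m, ∑ t ∈ Finset.range r,
              (k.choose t : ℝ) * (X.card : ℝ) ^ ((1:ℝ) - β) := by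
              refine add_le_add h2 ?_
              refine Finset.sum_le_sum (fun i _ => ?_)
              exact Finset.sum_le_sum (fun t ht => h3 i t ht)
          _ = (k : ℝ) + (m : ℝ) *
              (∑ t ∈ Finset.range r, (k.choose t : ℝ)) * (X.card : ℝ) ^ ((1:ℝ) - β) := by
              rw [← Finset.sum_mul, Finset.sum_const, Finset.card_univ, Fintype.card_fin,
                nsmul_eq_mul]
              ring
      exact lt_of_le_of_lt h5 (hbig k (by omega))
    have hBsub : B ⊆ X := by
      intro x hx
      rw [hB, Finset.mem_union] at hx
      rcases hx with hx | hx
      · exact hmem x (List.mem_toFinset.1 hx)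
      · rw [Finset.mem_biUnion] at hx
        obtain ⟨i, _, hx⟩ := hx
        rw [Finset.mem_biUnion] at hx
        obtain ⟨t, _, hx⟩ := hx
        rw [Finset.mem_biUnion] at hx
        obtain ⟨l, _, hx⟩ := hx
        by_cases hNN : NN f X i l
        · rw [if_pos hNN] at hx; simp at hx
        · rw [if_neg hNN] at hx; exact (Finset.mem_filter.1 hx).1
    have hvex : ∃ v ∈ X, v ∉ B := by
      by_contra hc
      push_neg at hc
      have : X ⊆ B := hc
      have := Finset.card_le_card this
      have : (X.card : ℝ) ≤ (B.card : ℝ) := by exact_mod_cast this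
      linarith
    obtain ⟨v, hvX, hvB⟩ := hvex
    have hvws : v ∉ ws := by
      intro hc
      exact hvB (by rw [hB]; exact Finset.mem_union_left _ (List.mem_toFinset.2 hc))
    refine ⟨ws ++ [v], by simp [hlen], ?_, ?_, ?_⟩
    · rw [List.nodup_append]
      exact ⟨hnd, List.nodup_singleton v, by
        intro a ha b hb hav
        rw [List.mem_singleton] at hb
        exact hvws (hb ▸ hav ▸ ha)⟩
    · intro u hu
      rw [List.mem_append] at hu
      rcases hu with hu | hu
      · exact hmem u hu
      · rw [List.mem_singleton] at hu; exact hu ▸ hvX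
    · intro i l v' hs hlenr hNNl
      rw [List.sublist_append_iff] at hs
      obtain ⟨r1, r2, heq, hr1, hr2⟩ := hs
      rw [List.sublist_singleton] at hr2
      rcases hr2 with hr2 | hr2
      · subst hr2
        rw [List.append_nil] at heq
        exact hch i l v' (heq ▸ hr1) hlenr hNNl
      · subst hr2
        obtain ⟨hl, hv'⟩ := List.append_inj' heq rfl
        subst hl
        have hv'' : v' = v := by simpa using hv'
        subst hv''
        intro hNNlv
        apply hvB
        rw [hB]
        refine Finset.mem_union_right _ ?_
        rw [Finset.mem_biUnion]
        refine ⟨i, Finset.mem_univ _, ?_⟩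
        rw [Finset.mem_biUnion]
        refine ⟨l.length, Finset.mem_range.2 (by omega), ?_⟩
        rw [Finset.mem_biUnion]
        refine ⟨l, List.mem_toFinset.2 (List.mem_sublistsLen_self hr1), ?_⟩
        rw [if_neg hNNl]
        exact Finset.mem_filter.2 ⟨hvX, hNNlv⟩

lemma hom {X : Finset (Fin n → F)} {ws : List (Fin n → F)} (hmem : ∀ v ∈ ws, v ∈ X)
    (hch : CH f X ws) :
    ∀ (l : List (Fin n → F)), l.Sublist ws → l.length ≤ r → ∀ i,
      (NN f X i l ↔ NN f X i ([] : List (Fin n → F))) := by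
  intro l
  induction l using List.reverseRecOn with
  | nil => intro _ _ i; exact Iff.rfl
  | append_singleton l' v ih =>
    intro hs hlen i
    have hs' : l'.Sublist ws := (List.sublist_append_left l' [v]).trans hs
    have hlen1 : l'.length + 1 ≤ r := by
      rw [List.length_append, List.length_singleton] at hlen
      omega
    have hlen' : l'.length ≤ r := by omega
    constructor
    · intro hNN
      by_contra hnil
      have hNNl' : ¬ NN f X i l' := by
        intro hc
        exact hnil ((ih hs' hlen' i).1 hc)
      exact hch i l' v hs hlen1 hNNl' hNN
    · intro hnil
      have hNNl' : NN f X i l' := (ih hs' hlen' i).2 hnil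
      refine NN_extend f (by omega) hNNl' (hmem v ?_)
      exact hs.subset (by simp)

end

section TTcard

lemma TT_mem_sum {n d : ℕ} {α : Fin n → ℕ} (h : α ∈ TT n d) : ∑ b, α b ≤ d := by
  simp only [TT, Finset.mem_filter] at h
  exact h.2

noncomputable def PS {n : ℕ} (α : Fin n → ℕ) (j : Fin n) : ℕ :=
  (∑ b ∈ Finset.univ.filter (fun b => b ≤ j), α b) + (j : ℕ)

lemma PS_strictMono {n : ℕ} (α : Fin n → ℕ) : StrictMono (PS α) := by
  intro j j' hjj
  have hsub : Finset.univ.filter (fun b => b ≤ j) ⊆ Finset.univ.filter (fun b => b ≤ j') := by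
    intro b hb
    rw [Finset.mem_filter] at hb ⊢
    exact ⟨hb.1, le_trans hb.2 (le_of_lt hjj)⟩
  have hsum : ∑ b ∈ Finset.univ.filter (fun b => b ≤ j), α b ≤
      ∑ b ∈ Finset.univ.filter (fun b => b ≤ j'), α b :=
    Finset.sum_le_sum_of_subset hsub
  have : (j : ℕ) < (j' : ℕ) := hjj
  unfold PS
  omega

lemma PS_lt {n d : ℕ} {α : Fin n → ℕ} (h : α ∈ TT n d) (j : Fin n) : PS α j < n + d := by
  have h1 : ∑ b ∈ Finset.univ.filter (fun b => b ≤ j), α b ≤ ∑ b, α b :=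
    Finset.sum_le_sum_of_subset (Finset.filter_subset _ _)
  have h2 := TT_mem_sum h
  have h3 : (j : ℕ) < n := j.isLt
  unfold PS
  omega

lemma PS_inj {n d : ℕ} {α α' : Fin n → ℕ} (hα : α ∈ TT n d) (hα' : α' ∈ TT n d)
    (h : PS α = PS α') : α = α' := by
  have key : ∀ jv : ℕ, ∀ hjv : jv < n, α ⟨jv, hjv⟩ = α' ⟨jv, hjv⟩ := by
    intro jv
    induction jv using Nat.strong_induction_on with
    | _ jv ih =>
    intro hjv
    set j : Fin n := ⟨jv, hjv⟩ with hj
    have hPS := congrFun h j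
    have hsplit : ∀ γ : Fin n → ℕ,
        ∑ b ∈ Finset.univ.filter (fun b => b ≤ j), γ b
          = γ j + ∑ b ∈ Finset.univ.filter (fun b => b < j), γ b := by
      intro γ
      have hset : Finset.univ.filter (fun b => b ≤ j)
          = insert j (Finset.univ.filter (fun b => b < j)) := by
        ext b
        simp only [Finset.mem_filter, Finset.mem_insert, Finset.mem_univ, true_and]
        constructor
        · intro hb
          rcases lt_or_eq_of_le hb with hb' | hb'
          · exact Or.inr hb'
          · exact Or.inl hb'
        · rintro (hb | hb)
          · exact le_of_eq hb
          · exact le_of_lt hb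
      rw [hset, Finset.sum_insert (by simp)]
    have htail : ∑ b ∈ Finset.univ.filter (fun b => b < j), α b
        = ∑ b ∈ Finset.univ.filter (fun b => b < j), α' b := by
      refine Finset.sum_congr rfl (fun b hb => ?_)
      rw [Finset.mem_filter] at hb
      have hb' : (b : ℕ) < jv := hb.2
      have := ih (b : ℕ) hb' b.isLt
      simpa using this
    unfold PS at hPS
    rw [hsplit α, hsplit α', htail] at hPS
    omega
  funext j
  have := key (j : ℕ) j.isLt
  simpa using this

lemma TT_card (n d : ℕ) : (TT n d).card ≤ (n + d).choose d := by
  classical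
  have hinj : ∀ α ∈ TT n d,
      (Finset.image (fun j => PS α j) Finset.univ : Finset ℕ)
        ∈ Finset.powersetCard n (Finset.range (n + d)) := by
    intro α hα
    rw [Finset.mem_powersetCard]
    constructor
    · intro x hx
      rw [Finset.mem_image] at hx
      obtain ⟨j, _, rfl⟩ := hx
      rw [Finset.mem_range]
      exact PS_lt hα j
    · rw [Finset.card_image_of_injective _ (PS_strictMono α).injective]
      simp
  have hcard := Finset.card_le_card_of_injOn
    (f := fun α => (Finset.image (fun j => PS α j) Finset.univ : Finset ℕ))
    (fun α hα => hinj α hα)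
    (by
      intro α hα α' hα' heq
      have heq' : Finset.image (fun j => PS α j) Finset.univ
          = Finset.image (fun j => PS α' j) Finset.univ := heq
      refine PS_inj hα hα' ?_
      have hc : (Finset.image (fun j => PS α j) Finset.univ).card = n := by
        rw [Finset.card_image_of_injective _ (PS_strictMono α).injective]; simp
      have h1 := Finset.orderEmbOfFin_unique hc
        (f := fun j => PS α j) (fun x => Finset.mem_image_of_mem _ (Finset.mem_univ x))
        (PS_strictMono α)
      have h2 := Finset.orderEmbOfFin_unique hc
        (f := fun j => PS α' j)
        (fun x => by rw [heq']; exact Finset.mem_image_of_mem _ (Finset.mem_univ x))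
        (PS_strictMono α')
      exact h1.trans h2.symm)
  refine le_trans hcard ?_
  rw [Finset.card_powersetCard, Finset.card_range]
  have : (n + d).choose n = (n + d).choose d := by
    have h := Nat.choose_symm (n := n + d) (k := d) (by omega)
    simpa [show n + d - d = n by omega] using h
  omega

end TTcard

end Stmt10Aux


open MvPolynomial
open scoped Classical
open Stmt10Aux

/-- Every r-uniform algebraic hypergraph of complexity (n,d,m) on N vertices has a
clique or independent set of size ≥ c·N^(1/γ) with γ = 2r²m(C(n+d,d)+1). -/
theorem stmt_10 (r n d m : ℕ) (hr : 0 < r) (hn : 0 < n) (hd : 0 < d) (hm : 0 < m) :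
    ∃ c : ℝ, 0 < c ∧
      ∀ (F : Type) [Field F] [DecidableEq F]
        (V : Finset (Fin n → F))
        (f : Fin m → MvPolynomial (Fin r × Fin n) F)
        (_ : ∀ i, (f i).totalDegree ≤ d)
        (φ : (Fin m → Prop) → Prop)
        (E : Finset (Finset (Fin n → F)))
        (_ : ∀ e ∈ E, e.card = r ∧ e ⊆ V)
        (_ : ∀ w : Fin r → (Fin n → F), Function.Injective w → (∀ j, w j ∈ V) →
          (Finset.image w Finset.univ ∈ E ↔
            φ (fun i => eval (fun p : Fin r × Fin n => w p.1 p.2) (f i) = 0))),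
        ∃ S : Finset (Fin n → F), S ⊆ V ∧
          ((∀ e : Finset (Fin n → F), e ⊆ S → e.card = r → e ∈ E) ∨
            (∀ e ∈ E, ¬ e ⊆ S)) ∧
          c * (V.card : ℝ) ^
            ((1 : ℝ) / (2 * r ^ 2 * m * ((n + d).choose d + 1))) ≤ (S.card : ℝ) := by
  classical
  set s' : ℕ := (n + d).choose d + 1 with hs'
  have hs3 : 3 ≤ s' := by
    have h2 : (d + 1).choose d ≤ (n + d).choose d := Nat.choose_le_choose d (by omega)
    have h3 : (d + 1).choose d = d + 1 := by
      simpa using Nat.choose_succ_self_right d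
    omega
  set G : ℝ := 2 * (r : ℝ) ^ 2 * (m : ℝ) * (((n + d).choose d : ℝ) + 1) with hGdef
  have hGs : G = 2 * (r : ℝ) ^ 2 * (m : ℝ) * (s' : ℝ) := by
    rw [hGdef, hs']; push_cast; ring
  have hr1 : (1 : ℝ) ≤ (r : ℝ) := by exact_mod_cast hr
  have hm1 : (1 : ℝ) ≤ (m : ℝ) := by exact_mod_cast hm
  have hs'3 : (3 : ℝ) ≤ (s' : ℝ) := by exact_mod_cast hs3
  have hGpos : 0 < G := by rw [hGs]; positivity
  have hr2 : (1 : ℝ) ≤ (r : ℝ) ^ 2 := by nlinarith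
  have hrm : (1 : ℝ) ≤ (r : ℝ) ^ 2 * (m : ℝ) := by nlinarith
  have hG6 : (6 : ℝ) ≤ G := by
    rw [hGs]
    nlinarith [mul_le_mul_of_nonneg_right hrm (by linarith : (0 : ℝ) ≤ (s' : ℝ))]
  have hGkey : 8 * (s' : ℝ) * ((r : ℝ) - 1) ≤ G := by
    have h4r : 4 * ((r : ℝ) - 1) ≤ (r : ℝ) ^ 2 * (m : ℝ) := by
      nlinarith [sq_nonneg ((r : ℝ) - 2)]
    rw [hGs]; nlinarith
  set β : ℝ := 1 / (2 * (s' : ℝ)) with hβdef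
  have hβ0 : 0 ≤ β := by positivity
  have hβhalf : β ≤ 1 / 2 := by
    rw [hβdef]
    rw [div_le_div_iff₀ (by positivity) (by norm_num)]
    nlinarith
  have hβ1 : β < 1 := by linarith
  set X1 : ℝ := ((2 : ℝ) ^ r * (m : ℝ) * (r : ℝ)) ^ (8 * s') with hX1def
  have h2r : (1 : ℝ) ≤ (2 : ℝ) ^ r := one_le_pow₀ (by norm_num)
  have hbase0 : (1 : ℝ) ≤ (2 : ℝ) ^ r * (m : ℝ) := by nlinarith
  have hbase1 : (1 : ℝ) ≤ (2 : ℝ) ^ r * (m : ℝ) * (r : ℝ) := by nlinarith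
  have hX1_1 : (1 : ℝ) ≤ X1 := one_le_pow₀ hbase1
  set N1 : ℝ := max 64 X1 with hN1def
  have hN1_64 : (64 : ℝ) ≤ N1 := le_max_left _ _
  have hN1_X1 : X1 ≤ N1 := le_max_right _ _
  have hN1pos : (0 : ℝ) < N1 := by linarith
  refine ⟨N1 ^ (-(1 : ℝ)/G), Real.rpow_pos_of_pos hN1pos _, ?_⟩
  intro F _ _ V f hdeg φ E hE hIff
  set c : ℝ := N1 ^ (-(1 : ℝ)/G) with hcdef
  have hcpos : 0 < c := Real.rpow_pos_of_pos hN1pos _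
  have hc1 : c ≤ 1 := Real.rpow_le_one_of_one_le_of_nonpos (by linarith)
    (le_of_lt (div_neg_of_neg_of_pos (by norm_num) hGpos))
  have hbridge : (1 : ℝ) / (2 * r ^ 2 * m * ((n + d).choose d + 1)) = (1 : ℝ)/G := by
    rw [hGdef]
  have hGinvpos : (0 : ℝ) < (1 : ℝ)/G := by
    apply div_pos one_pos hGpos
  clear_value G β X1 N1 c
  rcases Nat.eq_zero_or_pos V.card with hV0 | hVpos
  · refine ⟨∅, Finset.empty_subset _, Or.inl ?_, ?_⟩
    · intro e he hcard
      have he' : e = ∅ := Finset.subset_empty.1 he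
      rw [he'] at hcard
      simp at hcard
      omega
    · rw [hV0]
      simp only [Nat.cast_zero, Finset.card_empty]
      rw [Real.zero_rpow (ne_of_gt hGinvpos)]
      simp
  · have hNR1 : (1 : ℝ) ≤ (V.card : ℝ) := by exact_mod_cast hVpos
    rcases le_or_gt ((V.card : ℕ) : ℝ) N1 with hsmall | hbig
    · -- small case : use a singleton
      obtain ⟨v, hv⟩ := Finset.card_pos.1 hVpos
      have hbound : c * (V.card : ℝ) ^ ((1 : ℝ)/G) ≤ 1 := by
        have h1 : (V.card : ℝ) ^ ((1 : ℝ)/G) ≤ N1 ^ ((1 : ℝ)/G) :=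
          Real.rpow_le_rpow (by positivity) hsmall (le_of_lt hGinvpos)
        calc c * (V.card : ℝ) ^ ((1 : ℝ)/G) ≤ c * N1 ^ ((1 : ℝ)/G) :=
              mul_le_mul_of_nonneg_left h1 (le_of_lt hcpos)
          _ = N1 ^ (-(1 : ℝ)/G + (1 : ℝ)/G) := by rw [hcdef, ← Real.rpow_add hN1pos]
          _ = 1 := by
              rw [show -(1 : ℝ)/G + (1 : ℝ)/G = 0 by ring, Real.rpow_zero]
      by_cases hsing : ({v} : Finset (Fin n → F)) ∈ E
      · refine ⟨{v}, by simpa using hv, Or.inl ?_, ?_⟩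
        · intro e he hcard
          have he' : e = {v} := Finset.eq_of_subset_of_card_le he (by
            rw [hcard, Finset.card_singleton]; omega)
          rwa [he']
        · simpa using hbound
      · refine ⟨{v}, by simpa using hv, Or.inr ?_, ?_⟩
        · intro e heE hesub
          have hcard := (hE e heE).1
          have he' : e = {v} := Finset.eq_of_subset_of_card_le hesub (by
            rw [hcard, Finset.card_singleton]; omega)
          exact hsing (he' ▸ heE)
        · simpa using hbound
    · -- big case
      set NR : ℝ := ((V.card : ℕ) : ℝ) with hNRdef
      have hNR64 : (64 : ℝ) ≤ NR := le_trans hN1_64 (le_of_lt hbig)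
      have hNR1' : (1 : ℝ) ≤ NR := by linarith
      have hNRpos : (0 : ℝ) < NR := by linarith
      obtain ⟨X, hXV, hGOOD, hXcard⟩ := loop f hdeg hβ0 hβ1 ((n + d).choose d) V
        (le_trans (rho_le n d V) (TT_card n d))
      have hKs : (((n + d).choose d : ℕ) : ℝ) = (s' : ℝ) - 1 := by
        rw [hs']; push_cast; ring
      have hexp12 : (1 : ℝ)/2 ≤ ((1 : ℝ) - β) ^ ((n + d).choose d) := by
        have hb := one_add_mul_le_pow (a := -β) (by linarith) ((n + d).choose d)
        have hKβ : (((n + d).choose d : ℕ) : ℝ) * β ≤ 1/2 := by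
          rw [hKs, hβdef, mul_one_div, div_le_div_iff₀ (by positivity) (by norm_num)]
          nlinarith
        have h1b : (1 : ℝ) + ((n + d).choose d : ℝ) * (-β) ≤ (1 + (-β)) ^ ((n + d).choose d) := hb
        calc (1 : ℝ)/2 ≤ 1 + ((n + d).choose d : ℝ) * (-β) := by nlinarith
          _ ≤ (1 + (-β)) ^ ((n + d).choose d) := h1b
          _ = ((1 : ℝ) - β) ^ ((n + d).choose d) := by ring_nf
      have hMhalf : NR ^ ((1 : ℝ)/2) ≤ (X.card : ℝ) := by
        refine le_trans ?_ hXcard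
        exact Real.rpow_le_rpow_of_exponent_le hNR1' hexp12
      have hMpos : (0 : ℝ) < (X.card : ℝ) :=
        lt_of_lt_of_le (Real.rpow_pos_of_pos hNRpos _) hMhalf
      set k₀ : ℕ := ⌈c * NR ^ ((1 : ℝ)/G)⌉₊ with hk₀def
      have hk₀low : c * NR ^ ((1 : ℝ)/G) ≤ (k₀ : ℝ) := Nat.le_ceil _
      have hNRG1 : (1 : ℝ) ≤ NR ^ ((1 : ℝ)/G) := by
        have := Real.rpow_le_rpow_of_exponent_le hNR1' (le_of_lt hGinvpos)
        rwa [Real.rpow_zero] at this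
      have hk₀up : (k₀ : ℝ) ≤ 2 * NR ^ ((1 : ℝ)/G) := by
        have h1 : (k₀ : ℝ) < c * NR ^ ((1 : ℝ)/G) + 1 := Nat.ceil_lt_add_one (by positivity)
        have h2 : c * NR ^ ((1 : ℝ)/G) ≤ NR ^ ((1 : ℝ)/G) := by
          nlinarith [Real.rpow_nonneg (le_of_lt hNRpos) ((1 : ℝ)/G)]
        linarith [hNRG1]
      clear_value k₀
      have hMβ : NR ^ (β/2) ≤ (X.card : ℝ) ^ β := by
        have h1 := Real.rpow_le_rpow (Real.rpow_nonneg (le_of_lt hNRpos) _) hMhalf hβ0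
        rw [← Real.rpow_mul (le_of_lt hNRpos)] at h1
        have h2 : (1 : ℝ)/2 * β = β/2 := by ring
        rwa [h2] at h1
      set rr : ℝ := ((r - 1 : ℕ) : ℝ) with hrrdef
      have hrr : rr = (r : ℝ) - 1 := by
        rw [hrrdef]
        push_cast [Nat.cast_sub (by omega : 1 ≤ r)]
        ring
      have hpowk : (k₀ : ℝ) ^ (r - 1) ≤ 2 ^ (r - 1) * NR ^ (rr/G) := by
        calc (k₀ : ℝ) ^ (r - 1) ≤ (2 * NR ^ ((1 : ℝ)/G)) ^ (r - 1) :=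
              pow_le_pow_left₀ (by positivity) hk₀up _
          _ = 2 ^ (r - 1) * (NR ^ ((1 : ℝ)/G)) ^ (r - 1) := mul_pow _ _ _
          _ = 2 ^ (r - 1) * NR ^ (rr/G) := by
              rw [← Real.rpow_natCast (NR ^ ((1 : ℝ)/G)) (r - 1),
                ← Real.rpow_mul (le_of_lt hNRpos)]
              congr 1
              rw [hrrdef]
              ring
      have hexpkey : (1 : ℝ)/(8 * (s' : ℝ)) + rr/G ≤ β/2 := by
        have h1 : rr/G ≤ (1 : ℝ)/(8 * (s' : ℝ)) := by
          rw [div_le_div_iff₀ hGpos (by positivity), hrr]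
          calc ((r : ℝ) - 1) * (8 * (s' : ℝ)) = 8 * (s' : ℝ) * ((r : ℝ) - 1) := by ring
            _ ≤ G := hGkey
            _ = 1 * G := (one_mul G).symm
        have h2 : β/2 = (1 : ℝ)/(4 * (s' : ℝ)) := by
          rw [hβdef]; ring
        rw [h2]
        have h3 : (1 : ℝ)/(8 * (s' : ℝ)) + (1 : ℝ)/(8 * (s' : ℝ)) = (1 : ℝ)/(4 * (s' : ℝ)) := by
          rw [div_add_div _ _ (by positivity) (by positivity), div_eq_div_iff (by positivity) (by positivity)]
          ring
        calc (1 : ℝ)/(8 * (s' : ℝ)) + rr/G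
            ≤ (1 : ℝ)/(8 * (s' : ℝ)) + (1 : ℝ)/(8 * (s' : ℝ)) := add_le_add le_rfl h1
          _ = (1 : ℝ)/(4 * (s' : ℝ)) := h3
      have hNkey : (2 : ℝ) ^ r * m * r ≤ NR ^ ((1 : ℝ)/(8 * (s' : ℝ))) := by
        have h1 : X1 ≤ NR := le_trans hN1_X1 (le_of_lt hbig)
        have h2 : X1 ^ ((1 : ℝ)/(8 * (s' : ℝ))) ≤ NR ^ ((1 : ℝ)/(8 * (s' : ℝ))) :=
          Real.rpow_le_rpow (by positivity) h1 (by positivity)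
        have h3 : X1 ^ ((1 : ℝ)/(8 * (s' : ℝ))) = (2 : ℝ) ^ r * m * r := by
          rw [hX1def, ← Real.rpow_natCast ((2 : ℝ) ^ r * (m : ℝ) * (r : ℝ)) (8 * s'),
            ← Real.rpow_mul (by linarith)]
          rw [show ((8 * s' : ℕ) : ℝ) * ((1 : ℝ)/(8 * (s' : ℝ))) = 1 by
            push_cast
            rw [mul_one_div]
            rw [div_self (by positivity)]]
          exact Real.rpow_one _
        linarith
      have hA2 : 2 * (m : ℝ) * (r : ℝ) * (k₀ : ℝ) ^ (r - 1) ≤ NR ^ (β/2) := by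
        have h2pow : (2 : ℝ) ^ r = 2 * 2 ^ (r - 1) := by
          rw [← pow_succ']
          congr 1
          omega
        calc 2 * (m : ℝ) * (r : ℝ) * (k₀ : ℝ) ^ (r - 1)
            ≤ 2 * (m : ℝ) * (r : ℝ) * (2 ^ (r - 1) * NR ^ (rr/G)) := by
              apply mul_le_mul_of_nonneg_left hpowk (by positivity)
          _ = ((2 : ℝ) ^ r * m * r) * NR ^ (rr/G) := by rw [h2pow]; ring
          _ ≤ NR ^ ((1 : ℝ)/(8 * (s' : ℝ))) * NR ^ (rr/G) := by
              apply mul_le_mul_of_nonneg_right hNkey (by positivity)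
          _ = NR ^ ((1 : ℝ)/(8 * (s' : ℝ)) + rr/G) := (Real.rpow_add hNRpos _ _).symm
          _ ≤ NR ^ (β/2) := Real.rpow_le_rpow_of_exponent_le hNR1' hexpkey
      have hsplitM : (X.card : ℝ) ^ β * (X.card : ℝ) ^ ((1 : ℝ) - β) = (X.card : ℝ) := by
        rw [← Real.rpow_add hMpos]
        norm_num
      have hA : (m : ℝ) * (r : ℝ) * (k₀ : ℝ) ^ (r - 1) * (X.card : ℝ) ^ ((1 : ℝ) - β)
          ≤ (X.card : ℝ)/2 := by
        have h1 : (m : ℝ) * (r : ℝ) * (k₀ : ℝ) ^ (r - 1) ≤ (X.card : ℝ) ^ β / 2 := by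
          have h2 : NR ^ (β/2) ≤ (X.card : ℝ) ^ β := hMβ
          linarith [hA2, h2]
        calc (m : ℝ) * (r : ℝ) * (k₀ : ℝ) ^ (r - 1) * (X.card : ℝ) ^ ((1 : ℝ) - β)
            ≤ ((X.card : ℝ) ^ β / 2) * (X.card : ℝ) ^ ((1 : ℝ) - β) :=
              mul_le_mul_of_nonneg_right h1 (Real.rpow_nonneg (le_of_lt hMpos) _)
          _ = (X.card : ℝ)/2 := by
              rw [div_mul_eq_mul_div, hsplitM]
      have hB : (k₀ : ℝ) ≤ (X.card : ℝ)/2 := by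
        have h13 : (4 : ℝ) ≤ NR ^ ((1 : ℝ)/2 - (1 : ℝ)/G) := by
          have hge : (1 : ℝ)/3 ≤ (1 : ℝ)/2 - (1 : ℝ)/G := by
            have hG16 : (1 : ℝ)/G ≤ 1/6 := by
              rw [div_le_div_iff₀ hGpos (by norm_num)]
              linarith
            linarith
          have h64 : (64 : ℝ) ^ ((1 : ℝ)/3) = 4 := by
            rw [show (64 : ℝ) = (4 : ℝ) ^ (3 : ℕ) by norm_num,
              ← Real.rpow_natCast ((4 : ℝ)) 3, ← Real.rpow_mul (by norm_num)]
            norm_num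
          calc (4 : ℝ) = (64 : ℝ) ^ ((1 : ℝ)/3) := h64.symm
            _ ≤ NR ^ ((1 : ℝ)/3) := Real.rpow_le_rpow (by norm_num) hNR64 (by norm_num)
            _ ≤ NR ^ ((1 : ℝ)/2 - (1 : ℝ)/G) := Real.rpow_le_rpow_of_exponent_le hNR1' hge
        have hsplit2 : NR ^ ((1 : ℝ)/2 - (1 : ℝ)/G) * NR ^ ((1 : ℝ)/G) = NR ^ ((1 : ℝ)/2) := by
          rw [← Real.rpow_add hNRpos]
          ring_nf
        have h4 : 4 * NR ^ ((1 : ℝ)/G) ≤ NR ^ ((1 : ℝ)/2) := by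
          calc 4 * NR ^ ((1 : ℝ)/G) ≤ NR ^ ((1 : ℝ)/2 - (1 : ℝ)/G) * NR ^ ((1 : ℝ)/G) :=
                mul_le_mul_of_nonneg_right h13 (by positivity)
            _ = NR ^ ((1 : ℝ)/2) := hsplit2
        linarith
      have hgreedyhyp : ∀ j : ℕ, j < k₀ → (j : ℝ) + (m : ℝ) *
          (∑ t ∈ Finset.range r, (j.choose t : ℝ)) * (X.card : ℝ) ^ ((1 : ℝ) - β)
          < (X.card : ℝ) := by
        intro j hj
        have hjk : (j : ℝ) + 1 ≤ (k₀ : ℝ) := by exact_mod_cast hj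
        have hk₀0 : (0 : ℝ) ≤ (k₀ : ℝ) := by positivity
        have hsum : (∑ t ∈ Finset.range r, (j.choose t : ℝ)) ≤ (r : ℝ) * (k₀ : ℝ) ^ (r - 1) := by
          have hterm : ∀ t ∈ Finset.range r, (j.choose t : ℝ) ≤ (k₀ : ℝ) ^ (r - 1) := by
            intro t ht
            have h1 : j.choose t ≤ (j + 1) ^ (r - 1) := by
              calc j.choose t ≤ j ^ t := Nat.choose_le_pow j t
                _ ≤ (j + 1) ^ t := Nat.pow_le_pow_left (by omega) _
                _ ≤ (j + 1) ^ (r - 1) := Nat.pow_le_pow_right (by omega) (by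
                      have := Finset.mem_range.1 ht
                      omega)
            calc (j.choose t : ℝ) ≤ (((j + 1) ^ (r - 1) : ℕ) : ℝ) := by exact_mod_cast h1
              _ = ((j : ℝ) + 1) ^ (r - 1) := by push_cast; ring
              _ ≤ (k₀ : ℝ) ^ (r - 1) := pow_le_pow_left₀ (by positivity) hjk _
          calc (∑ t ∈ Finset.range r, (j.choose t : ℝ))
              ≤ ∑ t ∈ Finset.range r, (k₀ : ℝ) ^ (r - 1) := Finset.sum_le_sum hterm
            _ = (r : ℝ) * (k₀ : ℝ) ^ (r - 1) := by
                rw [Finset.sum_const, Finset.card_range, nsmul_eq_mul]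
        have hmid : (m : ℝ) * (∑ t ∈ Finset.range r, (j.choose t : ℝ)) *
            (X.card : ℝ) ^ ((1 : ℝ) - β) ≤ (X.card : ℝ)/2 := by
          have hrpnn : (0 : ℝ) ≤ (X.card : ℝ) ^ ((1 : ℝ) - β) :=
            Real.rpow_nonneg (le_of_lt hMpos) _
          have h1 : (m : ℝ) * (∑ t ∈ Finset.range r, (j.choose t : ℝ)) ≤
              (m : ℝ) * ((r : ℝ) * (k₀ : ℝ) ^ (r - 1)) :=
            mul_le_mul_of_nonneg_left hsum (by positivity)
          calc (m : ℝ) * (∑ t ∈ Finset.range r, (j.choose t : ℝ)) *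
              (X.card : ℝ) ^ ((1 : ℝ) - β)
              ≤ (m : ℝ) * ((r : ℝ) * (k₀ : ℝ) ^ (r - 1)) * (X.card : ℝ) ^ ((1 : ℝ) - β) :=
                mul_le_mul_of_nonneg_right h1 hrpnn
            _ = (m : ℝ) * (r : ℝ) * (k₀ : ℝ) ^ (r - 1) * (X.card : ℝ) ^ ((1 : ℝ) - β) := by
                ring
            _ ≤ (X.card : ℝ)/2 := hA
        linarith
      obtain ⟨ws, hwslen, hwsnd, hwsmem, hwsch⟩ := greedy f hGOOD k₀ hgreedyhyp
      have hScard : ws.toFinset.card = k₀ := by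
        rw [List.toFinset_card_of_nodup hwsnd, hwslen]
      have hSsubV : ws.toFinset ⊆ V := by
        intro x hx
        exact hXV (hwsmem x (List.mem_toFinset.1 hx))
      have hkey : ∀ e : Finset (Fin n → F), e ⊆ ws.toFinset → e.card = r →
          (e ∈ E ↔ φ (fun i => NN f X i ([] : List (Fin n → F)))) := by
        intro e heS hecard
        set l : List (Fin n → F) := ws.filter (fun x => x ∈ e) with hldef
        have hlsub : l.Sublist ws := List.filter_sublist
        have hlnd : l.Nodup := hwsnd.filter _
        have hltf : l.toFinset = e := by
          ext x
          rw [hldef, List.mem_toFinset, List.mem_filter]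
          constructor
          · rintro ⟨_, hx⟩
            simpa using hx
          · intro hx
            exact ⟨List.mem_toFinset.1 (heS hx), by simpa using hx⟩
        have hllen : l.length = r := by
          rw [← List.toFinset_card_of_nodup hlnd, hltf, hecard]
        have hwdef : ∀ j : Fin r, (j : ℕ) < l.length := fun j => by
          rw [hllen]; exact j.isLt
        set w : Fin r → (Fin n → F) := fun j => l[(j : ℕ)]'(hwdef j) with hwdef2
        have hwinj : Function.Injective w := by
          intro a b hab
          have h1 := List.nodup_iff_injective_get.1 hlnd
          have h2 : l.get ⟨(a : ℕ), hwdef a⟩ = l.get ⟨(b : ℕ), hwdef b⟩ := by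
            simpa [List.get_eq_getElem] using hab
          have h3 := h1 h2
          exact Fin.ext (congrArg (fun x : Fin l.length => (x : ℕ)) h3)
        have hwmemV : ∀ j, w j ∈ V := by
          intro j
          apply hXV
          apply hwsmem
          exact hlsub.subset (List.getElem_mem _)
        have himg : Finset.image w Finset.univ = e := by
          ext x
          rw [Finset.mem_image]
          constructor
          · rintro ⟨j, _, rfl⟩
            rw [← hltf, List.mem_toFinset]
            exact List.getElem_mem _
          · intro hx
            rw [← hltf, List.mem_toFinset, List.mem_iff_getElem] at hx
            obtain ⟨idx, hidx, hval⟩ := hx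
            refine ⟨⟨idx, by rw [← hllen]; exact hidx⟩, Finset.mem_univ _, hval⟩
        have hiff := hIff w hwinj hwmemV
        rw [himg] at hiff
        have heval : (fun i => eval (fun p : Fin r × Fin n => w p.1 p.2) (f i) = 0)
            = (fun i => NN f X i ([] : List (Fin n → F))) := by
          funext i
          apply propext
          have hfull : (eval (fun p : Fin r × Fin n => w p.1 p.2) (f i) = 0) ↔ NN f X i l := by
            constructor
            · intro hev g h1 h2
              have hgw : (fun p : Fin r × Fin n => g p.1 p.2)
                  = (fun p : Fin r × Fin n => w p.1 p.2) := by
                funext p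
                rw [h1 p.1 (hwdef p.1)]
              rw [hgw]
              exact hev
            · intro hNN2
              apply hNN2 w
              · intro j hj
                rfl
              · intro j hj
                exfalso
                have hjlt := j.isLt
                omega
          exact hfull.trans (hom f (fun v hv => hwsmem v hv) hwsch l hlsub (by omega) i)
        rw [heval] at hiff
        exact hiff
      have hfinalbound : c * NR ^ ((1 : ℝ)/G) ≤ (ws.toFinset.card : ℝ) := by
        rw [hScard]
        exact hk₀low
      rcases Classical.em (φ (fun i => NN f X i ([] : List (Fin n → F)))) with hφ | hφ
      · refine ⟨ws.toFinset, hSsubV, Or.inl ?_, hfinalbound⟩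
        intro e he hc2
        exact (hkey e he hc2).2 hφ
      · refine ⟨ws.toFinset, hSsubV, Or.inr ?_, hfinalbound⟩
        intro e heE heS
        exact hφ ((hkey e heS (hE e heE).1).1 heE)
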